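/- Let d, t ≥ 1, let v₁, …, v_n be n distinct points in ℝ^d, and let E be a relation on ordered pairs such that there exist s ≤ t polynomials g₁, …, g_s in 2d real variables of degree at most t and a Boolean function Φ : {0,1}^s → {0,1} with: for all 1 ≤ i < j ≤ n, (v_i, v_j) ∈ E ⇔ Φ(𝟙[g₁(v_i, v_j) ≥ 0], …, 𝟙[g_s(v_i, v_j) ≥ 0]) = 1. Define V* = {(v_i, i) : 1 ≤ i ≤ n} ⊆ ℝ^{d+1}, where (v_i, i) denotes the point whose first d coordinates are those of v_i and whose last coordinate is i. Then there exists a symmetric semi-algebraic relation E* on V* of complexity at most 2t + 2 such that for all 1 ≤ i < j ≤ n: ((v_i, i), (v_j, j)) ∈ E* if and only if (v_i, v_j) ∈ E. -/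

import Mathlib

open scoped Classical
open MvPolynomial

lemma append_val {α : Type*} {m n : ℕ} (u : Fin m → α) (w : Fin n → α) (x : Fin (m+n)) :
    Fin.append u w x = if h : (x:ℕ) < m then u ⟨x, h⟩ else w ⟨(x:ℕ) - m, by omega⟩ := by
  rcases x with ⟨x, hx⟩
  simp [Fin.append, Fin.addCases, Fin.castLT, Fin.subNat]

lemma snoc_val {α : Type*} {m : ℕ} (u : Fin m → α) (a : α) (x : Fin (m+1)) :
    (Fin.snoc u a : Fin (m+1) → α) x = if h : (x:ℕ) < m then u ⟨x, h⟩ else a := by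
  rcases x with ⟨x, hx⟩
  simp [Fin.snoc, Fin.castLT]

def emb1 (d : ℕ) : Fin (d+d) → Fin ((d+1)+(d+1)) := fun k =>
  if (k:ℕ) < d then ⟨k, by omega⟩ else ⟨(k:ℕ)+1, by have := k.isLt; omega⟩

def emb2 (d : ℕ) : Fin (d+d) → Fin ((d+1)+(d+1)) := fun k =>
  if h : (k:ℕ) < d then ⟨(d+1)+(k:ℕ), by omega⟩ else ⟨(k:ℕ)-d, by omega⟩

lemma comp_emb2 (d : ℕ) (x y : Fin (d+1) → ℝ) :
    (Fin.append x y) ∘ emb2 d = (Fin.append y x) ∘ emb1 d := by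
  funext k
  rcases k with ⟨k, hk⟩
  simp only [Function.comp_apply, emb1, emb2]
  split_ifs with h <;>
    simp only [append_val, Fin.val_mk] <;>
    split_ifs <;>
    first
      | omega
      | rfl
      | exact congrArg _ (Fin.val_injective (by simp only [Fin.val_mk]; omega))

lemma comp_emb1 {d : ℕ} (u w : Fin d → ℝ) (a b : ℝ) :
    (Fin.append (Fin.snoc u a) (Fin.snoc w b)) ∘ emb1 d = Fin.append u w := by
  funext k
  rcases k with ⟨k, hk⟩
  simp only [Function.comp_apply, emb1]
  split_ifs with h <;>
    simp only [append_val, snoc_val, Fin.val_mk] <;>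
    split_ifs <;>
    first
      | omega
      | rfl
      | exact congrArg _ (Fin.val_injective (by simp only [Fin.val_mk]; omega))

/-- the last-coordinate difference polynomial -/
noncomputable def lastPoly (d : ℕ) : MvPolynomial (Fin ((d+1)+(d+1))) ℝ :=
  X ⟨d, by omega⟩ - X ⟨(d+1)+d, by omega⟩

lemma lastPoly_deg (d : ℕ) : (lastPoly d).totalDegree ≤ 1 := by
  rw [lastPoly, sub_eq_add_neg]
  refine le_trans (MvPolynomial.totalDegree_add _ _) ?_
  rw [MvPolynomial.totalDegree_neg, MvPolynomial.totalDegree_X, MvPolynomial.totalDegree_X]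
  simp

lemma lastPoly_eval (d : ℕ) (x y : Fin (d+1) → ℝ) :
    MvPolynomial.eval (Fin.append x y) (lastPoly d) = x (Fin.last d) - y (Fin.last d) := by
  rw [lastPoly, map_sub, eval_X, eval_X, append_val, append_val]
  rw [dif_pos (by simp only [Fin.val_mk]; omega), dif_neg (by simp only [Fin.val_mk]; omega)]
  congr 1 <;> exact congrArg _ (Fin.val_injective (by simp only [Fin.val_mk, Fin.val_last]; omega))

noncomputable def symPoly (d s : ℕ) (g : Fin s → MvPolynomial (Fin (d+d)) ℝ) :
    Fin (s+s+1) → MvPolynomial (Fin ((d+1)+(d+1))) ℝ := fun k =>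
  if h : (k:ℕ) < s then rename (emb1 d) (g ⟨k, h⟩)
  else if h2 : (k:ℕ) < s+s then rename (emb2 d) (g ⟨(k:ℕ)-s, by omega⟩)
  else lastPoly d

def symPhi (s : ℕ) (Φ : (Fin s → Bool) → Bool) : (Fin (s+s+1) → Bool) → Bool := fun b =>
  if b ⟨s+s, by omega⟩ = true then Φ (fun k => b ⟨s+(k:ℕ), by have := k.isLt; omega⟩)
  else Φ (fun k => b ⟨(k:ℕ), by have := k.isLt; omega⟩)

/-- `E` is a symmetric relation on the points of `V`. -/
def SymmetricOn {α : Type*} (V : Finset α) (E : α → α → Prop) : Prop :=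
  ∀ u ∈ V, ∀ v ∈ V, (E u v ↔ E v u)

/-- `E` is a semi-algebraic relation of complexity at most `t` on the point set
`V ⊆ ℝ^d`. -/
def SemialgebraicOn (d t : ℕ) (V : Finset (Fin d → ℝ))
    (E : (Fin d → ℝ) → (Fin d → ℝ) → Prop) : Prop :=
  ∃ s : ℕ, s ≤ t ∧
    ∃ (g : Fin s → MvPolynomial (Fin (d + d)) ℝ) (Φ : (Fin s → Bool) → Bool),
      (∀ i, (g i).totalDegree ≤ t) ∧
      ∀ u ∈ V, ∀ v ∈ V, u ≠ v →
        (E u v ↔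
          Φ (fun i => decide (0 ≤ MvPolynomial.eval (Fin.append u v) (g i))) = true)

theorem symmetrize_semialgebraic_relation (d t n : ℕ) (hd : 1 ≤ d) (ht : 1 ≤ t)
    (v : Fin n → (Fin d → ℝ)) (hv : Function.Injective v)
    (E : (Fin d → ℝ) → (Fin d → ℝ) → Prop)
    (hE : ∃ s : ℕ, s ≤ t ∧
      ∃ (g : Fin s → MvPolynomial (Fin (d + d)) ℝ) (Φ : (Fin s → Bool) → Bool),
        (∀ i, (g i).totalDegree ≤ t) ∧
        ∀ i j : Fin n, i < j →
          (E (v i) (v j) ↔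
            Φ (fun k =>
              decide (0 ≤ MvPolynomial.eval (Fin.append (v i) (v j)) (g k))) = true)) :
    ∃ Estar : (Fin (d + 1) → ℝ) → (Fin (d + 1) → ℝ) → Prop,
      SymmetricOn
        (Finset.image (fun i : Fin n => Fin.snoc (v i) ((i : ℕ) : ℝ)) Finset.univ)
        Estar ∧
      SemialgebraicOn (d + 1) (2 * t + 2)
        (Finset.image (fun i : Fin n => Fin.snoc (v i) ((i : ℕ) : ℝ)) Finset.univ)
        Estar ∧
      ∀ i j : Fin n, i < j →
        (Estar (Fin.snoc (v i) ((i : ℕ) : ℝ)) (Fin.snoc (v j) ((j : ℕ) : ℝ)) ↔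
          E (v i) (v j)) := by
  obtain ⟨s, hs, g, Φ, hdeg, hEiff⟩ := hE
  set B : (Fin (d+1) → ℝ) → (Fin (d+1) → ℝ) → Fin s → Bool := fun x y k =>
    decide (0 ≤ MvPolynomial.eval (Fin.append x y) (rename (emb1 d) (g k))) with hB
  refine ⟨fun x y =>
      (x (Fin.last d) < y (Fin.last d) ∧ Φ (B x y) = true) ∨
      (y (Fin.last d) < x (Fin.last d) ∧ Φ (B y x) = true), ?_, ?_, ?_⟩
  · intro u _ w _
    exact or_comm
  · refine ⟨s+s+1, by omega, symPoly d s g, symPhi s Φ, ?_, ?_⟩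
    · intro k
      rw [symPoly]
      split_ifs with h1 h2
      · exact le_trans (MvPolynomial.totalDegree_rename_le _ _) (le_trans (hdeg _) (by omega))
      · exact le_trans (MvPolynomial.totalDegree_rename_le _ _) (le_trans (hdeg _) (by omega))
      · exact le_trans (lastPoly_deg d) (by omega)
    · intro u hu w hw hne
      obtain ⟨i, -, rfl⟩ := Finset.mem_image.1 hu
      obtain ⟨j, -, rfl⟩ := Finset.mem_image.1 hw
      have hij : i ≠ j := fun h => hne (by rw [h])
      have hab : ((i:ℕ):ℝ) ≠ ((j:ℕ):ℝ) := by
        exact_mod_cast fun h => hij (Fin.val_injective (by exact_mod_cast h))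
      set u : Fin (d+1) → ℝ := Fin.snoc (v i) ((i:ℕ):ℝ) with hu'
      set w : Fin (d+1) → ℝ := Fin.snoc (v j) ((j:ℕ):ℝ) with hw'
      have hul : u (Fin.last d) = ((i:ℕ):ℝ) := by simp [hu']
      have hwl : w (Fin.last d) = ((j:ℕ):ℝ) := by simp [hw']
      have hbitlast : ∀ (hx : s+s < s+s+1),
          decide (0 ≤ MvPolynomial.eval (Fin.append u w) (symPoly d s g ⟨s+s, hx⟩))
            = decide (0 ≤ ((i:ℕ):ℝ) - ((j:ℕ):ℝ)) := by
        intro hx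
        simp only [symPoly]
        rw [dif_neg (by first | omega | (simp only [Fin.val_mk]; omega)),
          dif_neg (by first | omega | (simp only [Fin.val_mk]; omega))]
        rw [lastPoly_eval, hul, hwl]
      have hbit1 : ∀ (k : Fin s) (hx : (k:ℕ) < s+s+1),
          decide (0 ≤ MvPolynomial.eval (Fin.append u w) (symPoly d s g ⟨(k:ℕ), hx⟩))
            = B u w k := by
        intro k hx
        simp only [symPoly]
        rw [dif_pos (by have := k.isLt; first | omega | (simp only [Fin.val_mk]; omega))]
      have hbit2 : ∀ (k : Fin s) (hx : s+(k:ℕ) < s+s+1),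
          decide (0 ≤ MvPolynomial.eval (Fin.append u w) (symPoly d s g ⟨s+(k:ℕ), hx⟩))
            = B w u k := by
        intro k hx
        simp only [symPoly]
        rw [dif_neg (by have := k.isLt; first | omega | (simp only [Fin.val_mk]; omega)),
          dif_pos (by have := k.isLt; first | omega | (simp only [Fin.val_mk]; omega))]
        rw [MvPolynomial.eval_rename, comp_emb2, ← MvPolynomial.eval_rename]
        simp only [Fin.val_mk, Nat.add_sub_cancel_left, Fin.eta]
        rfl
      rcases lt_or_gt_of_ne hab with hlt | hlt
      · have hfalse : decide (0 ≤ ((i:ℕ):ℝ) - ((j:ℕ):ℝ)) = false := by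
          rw [decide_eq_false_iff_not]
          intro hh
          linarith
        have key : symPhi s Φ
            (fun k => decide (0 ≤ MvPolynomial.eval (Fin.append u w) (symPoly d s g k)))
              = Φ (B u w) := by
          simp only [symPhi]
          rw [hbitlast, hfalse]
          rw [if_neg (by simp)]
          exact congrArg Φ (funext fun k => hbit1 k _)
        rw [key]
        beta_reduce
        rw [hul, hwl]
        constructor
        · rintro (⟨-, h⟩ | ⟨h, -⟩)
          · exact h
          · linarith
        · exact fun h => Or.inl ⟨hlt, h⟩
      · have htrue : decide (0 ≤ ((i:ℕ):ℝ) - ((j:ℕ):ℝ)) = true := by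
          rw [decide_eq_true_eq]
          linarith
        have key : symPhi s Φ
            (fun k => decide (0 ≤ MvPolynomial.eval (Fin.append u w) (symPoly d s g k)))
              = Φ (B w u) := by
          simp only [symPhi]
          rw [hbitlast, htrue]
          rw [if_pos rfl]
          exact congrArg Φ (funext fun k => hbit2 k _)
        rw [key]
        beta_reduce
        rw [hul, hwl]
        constructor
        · rintro (⟨h, -⟩ | ⟨-, h⟩)
          · linarith
          · exact h
        · exact fun h => Or.inr ⟨hlt, h⟩
  · intro i j hij
    have hlt : ((i:ℕ):ℝ) < ((j:ℕ):ℝ) := by exact_mod_cast hij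
    have hB' : B (Fin.snoc (v i) ((i:ℕ):ℝ)) (Fin.snoc (v j) ((j:ℕ):ℝ)) =
        fun k => decide (0 ≤ MvPolynomial.eval (Fin.append (v i) (v j)) (g k)) := by
      funext k
      simp only [hB]
      rw [MvPolynomial.eval_rename, comp_emb1]
    simp only [Fin.snoc_last]
    constructor
    · rintro (⟨-, h⟩ | ⟨h, -⟩)
      · rw [hEiff i j hij]
        rw [hB'] at h
        exact h
      · linarith
    · intro h
      refine Or.inl ⟨hlt, ?_⟩
      rw [hB']
      rw [← hEiff i j hij]
      exact h
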